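/- Let K ⊆ ℝⁿ be nonempty, compact, and convex, and let F : ℝⁿ → ℝⁿ be continuously differentiable and monotone on K. Define V(x) = ⟨x, F(x)⟩ − min_{y∈K} ⟨y, F(x)⟩. Let x : [0, ∞) → ℝⁿ be locally Lipschitz with x(t) ∈ K for all t ≥ 0, and suppose that for almost every t ≥ 0 there exists b(t) ∈ argmin_{y∈K} ⟨y, F(x(t))⟩ such that x′(t) = b(t) − x(t). Then V(x(t)) ≤ V(x(0))·e^{−t} for all t ≥ 0. -/

import Mathlib

open scoped InnerProductSpace
open MeasureTheory

section Aux
open Set Filter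


lemma lipOnGlue {β : Type*} [PseudoMetricSpace β] {f : ℝ → β} {K1 K2 : NNReal} {a c b : ℝ}
    (h1 : LipschitzOnWith K1 f (Icc a c)) (h2 : LipschitzOnWith K2 f (Icc c b)) :
    LipschitzOnWith (max K1 K2) f (Icc a b) := by
  rw [lipschitzOnWith_iff_dist_le_mul] at h1 h2 ⊢
  have hco : ((max K1 K2 : NNReal) : ℝ) = max (K1:ℝ) (K2:ℝ) := by push_cast; rfl
  have main : ∀ x ∈ Icc a b, ∀ y ∈ Icc a b, x ≤ y → dist (f x) (f y) ≤ (max K1 K2 : NNReal) * dist x y := by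
    intro x hx y hy hxy
    rw [hco]
    rcases le_or_gt y c with h | h
    · calc dist (f x) (f y) ≤ K1 * dist x y := h1 x ⟨hx.1, hxy.trans h⟩ y ⟨hy.1, h⟩
        _ ≤ max (K1:ℝ) (K2:ℝ) * dist x y :=
          mul_le_mul_of_nonneg_right (le_max_left _ _) dist_nonneg
    rcases le_or_gt c x with h' | h'
    · calc dist (f x) (f y) ≤ K2 * dist x y := h2 x ⟨h', hx.2⟩ y ⟨h'.trans hxy, hy.2⟩
        _ ≤ max (K1:ℝ) (K2:ℝ) * dist x y :=
          mul_le_mul_of_nonneg_right (le_max_right _ _) dist_nonneg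
    · have hcI : c ∈ Icc a b := ⟨hx.1.trans h'.le, h.le.trans hy.2⟩
      have d1 : dist (f x) (f c) ≤ K1 * (c - x) := by
        have := h1 x ⟨hx.1, h'.le⟩ c ⟨hx.1.trans h'.le, le_rfl⟩
        rwa [Real.dist_eq, abs_of_nonpos (by linarith), neg_sub] at this
      have d2 : dist (f c) (f y) ≤ K2 * (y - c) := by
        have := h2 c ⟨le_rfl, h.le.trans hy.2⟩ y ⟨h.le, hy.2⟩
        rwa [Real.dist_eq, abs_of_nonpos (by linarith), neg_sub] at this
      have hd : dist x y = (c - x) + (y - c) := by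
        rw [Real.dist_eq, abs_of_nonpos (by linarith)]; ring
      have hK1 : (K1:ℝ) ≤ max (K1:ℝ) (K2:ℝ) := le_max_left _ _
      have hK2 : (K2:ℝ) ≤ max (K1:ℝ) (K2:ℝ) := le_max_right _ _
      calc dist (f x) (f y) ≤ dist (f x) (f c) + dist (f c) (f y) := dist_triangle _ _ _
        _ ≤ K1 * (c - x) + K2 * (y - c) := add_le_add d1 d2
        _ ≤ max (K1:ℝ) (K2:ℝ) * dist x y := by
            rw [hd]; nlinarith [NNReal.coe_nonneg K1, NNReal.coe_nonneg K2]
  intro x hx y hy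
  rcases le_total x y with hxy | hxy
  · exact main x hx y hy hxy
  · rw [dist_comm (f x), dist_comm x]; exact main y hy x hx hxy

lemma LocallyLipschitz.exists_lipschitzOnWith_Icc {β : Type*} [PseudoMetricSpace β]
    {f : ℝ → β} (hf : LocallyLipschitz f) (a b : ℝ) :
    ∃ K : NNReal, LipschitzOnWith K f (Icc a b) := by
  rcases lt_or_ge b a with hba | hab
  · exact ⟨1, by simp [Icc_eq_empty_of_lt hba]⟩
  set S : Set ℝ := {c | c ∈ Icc a b ∧ ∃ K : NNReal, LipschitzOnWith K f (Icc a c)} with hS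
  have haS : a ∈ S := by
    refine ⟨⟨le_rfl, hab⟩, 1, ?_⟩
    intro u hu v hv
    have : u = v := le_antisymm (hu.2.trans hv.1) (hv.2.trans hu.1)
    simp [this]
  have hbdd : BddAbove S := ⟨b, fun c hc => hc.1.2⟩
  set c := sSup S with hc
  have hcI : c ∈ Icc a b := ⟨le_csSup hbdd haS, csSup_le ⟨a, haS⟩ fun d hd => hd.1.2⟩
  obtain ⟨K', t, ht, hK'⟩ := hf c
  obtain ⟨ε, hε, hball⟩ := Metric.mem_nhds_iff.1 ht
  have hIccball : Icc (c - ε/2) (c + ε/2) ⊆ t := by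
    refine subset_trans ?_ hball
    intro u hu
    rw [Metric.mem_ball, Real.dist_eq]
    cases' hu with h1 h2
    exact abs_lt.2 ⟨by linarith, by linarith⟩
  have hKmid : LipschitzOnWith K' f (Icc (c - ε/2) (c + ε/2)) := hK'.mono hIccball
  obtain ⟨c', hc'S, hc'⟩ : ∃ c' ∈ S, c - ε/2 < c' := by
    rcases exists_lt_of_lt_csSup ⟨a, haS⟩ (show c - ε/2 < c by linarith) with ⟨c', hc'S, h⟩
    exact ⟨c', hc'S, h⟩
  simp only [hS, Set.mem_setOf_eq] at hc'S
  obtain ⟨hc'I, K, hK⟩ := hc'S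
  have hm : min (c + ε/2) b ∈ S := by
    refine ⟨⟨le_min (by linarith [hcI.1]) hab, min_le_right _ _⟩, max K K', ?_⟩
    exact lipOnGlue hK (hKmid.mono (Icc_subset_Icc (by linarith) (min_le_left _ _)))
  have hmle : min (c + ε/2) b ≤ c := le_csSup hbdd hm
  have hbS : b ∈ S := by
    rcases le_or_gt b (c + ε/2) with h | h
    · rwa [min_eq_right h] at hm
    · exfalso; rw [min_eq_left h.le] at hmle; linarith
  exact hbS.2


lemma gronwall_aux {h : ℝ → ℝ} {L : NNReal} (hh : LipschitzWith L h)
    {a b : ℝ} (hab : a ≤ b)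
    (hd : ∀ᵐ t : ℝ, t ∈ Set.Ioc a b → deriv h t ≤ 0) : h b ≤ h a := by
  rcases eq_or_lt_of_le hab with rfl | hab
  · exact le_rfl
  set Lr : ℝ := (L : ℝ) + 1 with hLrdef
  have hLr0 : 0 < Lr := by positivity
  set f : ℝ → ℝ := fun t => Lr * t - h t with hfdef
  have hfm : Monotone f := by
    intro s t hst
    have hdist := hh.dist_le_mul s t
    rw [Real.dist_eq, Real.dist_eq, abs_of_nonpos (by linarith : s - t ≤ 0), neg_sub] at hdist
    have h2 : h t - h s ≤ |h s - h t| := by rw [abs_sub_comm]; exact le_abs_self _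
    have h1 : h t - h s ≤ Lr * (t - s) := by nlinarith [NNReal.coe_nonneg L]
    simp only [hfdef]
    linarith
  have hfc : Continuous f := (continuous_const.mul continuous_id).sub hh.continuous
  have hst_eq : ∀ t, hfm.stieltjesFunction t = f t := by
    intro t
    rw [hfm.stieltjesFunction_eq]
    have hne : (nhdsWithin t (Set.Ioi t)).NeBot := inferInstance
    exact rightLim_eq_of_tendsto (h := hne)
      ((hfc.tendsto t).mono_left nhdsWithin_le_nhds)
  set μ := hfm.stieltjesFunction.measure with hμdef
  have hae : ∀ᵐ t : ℝ, HasDerivAt f ((μ.rnDeriv volume t).toReal) t := hfm.ae_hasDerivAt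
  have hlt : ∀ᵐ t : ℝ, μ.rnDeriv volume t < ⊤ := Measure.rnDeriv_lt_top μ volume
  have hglob : ∀ᵐ t : ℝ, t ∈ Set.Ioc a b → ENNReal.ofReal Lr ≤ μ.rnDeriv volume t := by
    filter_upwards [hae, hlt, hd] with t h1 h2 h3 ht
    have hheq : h = fun s => Lr * s - f s := by funext s; simp [hfdef]
    have hdh : HasDerivAt h (Lr - (μ.rnDeriv volume t).toReal) t := by
      rw [hheq]
      exact (((hasDerivAt_id t).const_mul Lr).sub h1).congr_deriv (by ring)
    have h0 : deriv h t ≤ 0 := h3 ht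
    rw [hdh.deriv] at h0
    calc ENNReal.ofReal Lr ≤ ENNReal.ofReal ((μ.rnDeriv volume t).toReal) :=
          ENNReal.ofReal_le_ofReal (by linarith)
      _ = μ.rnDeriv volume t := ENNReal.ofReal_toReal h2.ne
  have hres : ∀ᵐ t ∂(volume.restrict (Set.Ioc a b)), ENNReal.ofReal Lr ≤ μ.rnDeriv volume t :=
    (ae_restrict_of_ae hglob).mp ((ae_restrict_mem measurableSet_Ioc).mono fun t ht hi => hi ht)
  have step1 : ENNReal.ofReal Lr * volume (Set.Ioc a b) ≤ ∫⁻ t in Set.Ioc a b, μ.rnDeriv volume t := by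
    rw [← setLIntegral_const]
    exact lintegral_mono_ae hres
  have step2 : ∫⁻ t in Set.Ioc a b, μ.rnDeriv volume t
      = volume.withDensity (μ.rnDeriv volume) (Set.Ioc a b) :=
    (withDensity_apply _ measurableSet_Ioc).symm
  have step3 : volume.withDensity (μ.rnDeriv volume) (Set.Ioc a b) ≤ μ (Set.Ioc a b) :=
    Measure.le_iff'.1 (Measure.withDensity_rnDeriv_le μ volume) _
  have step4 : μ (Set.Ioc a b) = ENNReal.ofReal (f b - f a) := by
    rw [hμdef, StieltjesFunction.measure_Ioc, hst_eq, hst_eq]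
  have final : ENNReal.ofReal (Lr * (b - a)) ≤ ENNReal.ofReal (f b - f a) := by
    rw [ENNReal.ofReal_mul hLr0.le, ← Real.volume_Ioc]
    exact step1.trans (step2 ▸ (step3.trans_eq step4))
  have hpos : 0 < Lr * (b - a) := by nlinarith
  have hfpos : 0 < f b - f a :=
    ENNReal.ofReal_pos.1 (lt_of_lt_of_le (ENNReal.ofReal_pos.2 hpos) final)
  have hle : Lr * (b - a) ≤ f b - f a := (ENNReal.ofReal_le_ofReal_iff hfpos.le).1 final
  simp only [hfdef] at hle
  nlinarith


lemma quad_nonneg {n : ℕ} {K : Set (EuclideanSpace ℝ (Fin n))} (hKconv : Convex ℝ K)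
    {F : EuclideanSpace ℝ (Fin n) → EuclideanSpace ℝ (Fin n)} (hF : ContDiff ℝ 1 F)
    (hmono : ∀ u ∈ K, ∀ v ∈ K, 0 ≤ ⟪u - v, F u - F v⟫_ℝ)
    {z b : EuclideanSpace ℝ (Fin n)} (hz : z ∈ K) (hb : b ∈ K) :
    0 ≤ ⟪b - z, fderiv ℝ F z (b - z)⟫_ℝ := by
  set w := b - z with hw
  have hcurve : HasDerivAt (fun s : ℝ => z + s • w) w 0 := by
    simpa using ((hasDerivAt_id (0:ℝ)).smul_const w).const_add z
  have hFc : HasDerivAt (fun s : ℝ => F (z + s • w)) (fderiv ℝ F z w) 0 := by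
    have h1 := ((hF.differentiable one_ne_zero) (z + (0:ℝ) • w)).hasFDerivAt.comp_hasDerivAt 0 hcurve
    simp only [zero_smul, add_zero] at h1; exact h1
  have hψ : HasDerivAt (fun s : ℝ => ⟪w, F (z + s • w)⟫_ℝ) ⟪w, fderiv ℝ F z w⟫_ℝ 0 := by
    have := (hasDerivAt_const (0:ℝ) w).inner ℝ hFc
    simpa using this
  rw [hasDerivAt_iff_tendsto_slope] at hψ
  have hmonole : Set.Ioi (0:ℝ) ⊆ {(0:ℝ)}ᶜ := fun s hs => ne_of_gt hs
  have htend := hψ.mono_left (nhdsWithin_mono 0 hmonole)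
  refine ge_of_tendsto htend ?_
  filter_upwards [Ioc_mem_nhdsGT_of_mem (Set.left_mem_Ico.2 one_pos)] with s hs
  have hsK : z + s • w ∈ K := hKconv.add_smul_sub_mem hz hb ⟨hs.1.le, hs.2⟩
  have hmono' := hmono _ hsK _ hz
  have hsimp : z + s • w - z = s • w := by abel
  rw [hsimp, real_inner_smul_left] at hmono'
  have h2 : 0 ≤ ⟪w, F (z + s • w) - F z⟫_ℝ := nonneg_of_mul_nonneg_right hmono' hs.1
  have hslope : slope (fun s : ℝ => ⟪w, F (z + s • w)⟫_ℝ) 0 s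
      = ⟪w, F (z + s • w) - F z⟫_ℝ / s := by
    rw [slope_def_field]
    simp [inner_sub_right, div_eq_inv_mul]
  rw [hslope]
  exact div_nonneg h2 hs.1.le


end Aux


/-- Lyapunov decrease along best response dynamics. For `K` nonempty compact
convex, `F` continuously differentiable and monotone on `K`,
`V(x) = ⟨x, F(x)⟩ − min_{y∈K} ⟨y, F(x)⟩`, and a locally Lipschitz trajectory `x(t) ∈ K`
satisfying `x′(t) = b(t) − x(t)` with `b(t) ∈ argmin_{y∈K} ⟨y, F(x(t))⟩` for a.e. `t ≥ 0`,
one has `V(x(t)) ≤ V(x(0)) e^{−t}` for all `t ≥ 0`. -/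
theorem stmt_5 {n : ℕ} (K : Set (EuclideanSpace ℝ (Fin n)))
    (hKne : K.Nonempty) (hKcpt : IsCompact K) (hKconv : Convex ℝ K)
    (F : EuclideanSpace ℝ (Fin n) → EuclideanSpace ℝ (Fin n))
    (hF : ContDiff ℝ 1 F)
    (hmono : ∀ u ∈ K, ∀ v ∈ K, 0 ≤ ⟪u - v, F u - F v⟫_ℝ)
    (m : EuclideanSpace ℝ (Fin n) → ℝ)
    (hm : ∀ π : EuclideanSpace ℝ (Fin n), IsLeast ((fun y => ⟪y, π⟫_ℝ) '' K) (m π))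
    (V : EuclideanSpace ℝ (Fin n) → ℝ)
    (hV : ∀ z, V z = ⟪z, F z⟫_ℝ - m (F z))
    (x : ℝ → EuclideanSpace ℝ (Fin n))
    (hlip : LocallyLipschitz x) (hxK : ∀ t ≥ (0:ℝ), x t ∈ K)
    (hdyn : ∀ᵐ t ∂(volume.restrict (Set.Ici (0:ℝ))),
      ∃ b, (b ∈ K ∧ ∀ z ∈ K, ⟪b, F (x t)⟫_ℝ ≤ ⟪z, F (x t)⟫_ℝ) ∧
        HasDerivAt x (b - x t) t) :
    ∀ t ≥ (0:ℝ), V (x t) ≤ V (x 0) * Real.exp (-t) := by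
  intro T hT
  -- basic facts about m
  have hmle : ∀ π : EuclideanSpace ℝ (Fin n), ∀ z ∈ K, m π ≤ ⟪z, π⟫_ℝ :=
    fun π z hz => (hm π).2 ⟨z, hz, rfl⟩
  obtain ⟨R, hRK⟩ := hKcpt.isBounded.subset_closedBall 0
  have hnorm : ∀ y ∈ K, ‖y‖ ≤ R := fun y hy => by
    have := hRK hy
    rwa [Metric.mem_closedBall, dist_zero_right] at this
  obtain ⟨y0, hy0⟩ := hKne
  have hR0 : 0 ≤ R := le_trans (norm_nonneg y0) (hnorm y0 hy0)
  have hmLip : LipschitzWith R.toNNReal m := by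
    apply LipschitzWith.of_le_add_mul
    intro π₁ π₂
    obtain ⟨y, hyK, hyeq⟩ := (hm π₂).1
    simp only at hyeq
    have h1 : m π₁ ≤ ⟪y, π₁⟫_ℝ := hmle π₁ y hyK
    have h3 : ⟪y, π₁ - π₂⟫_ℝ ≤ ‖y‖ * ‖π₁ - π₂‖ := real_inner_le_norm _ _
    have h4 : ‖y‖ * ‖π₁ - π₂‖ ≤ R * dist π₁ π₂ := by
      rw [dist_eq_norm]
      exact mul_le_mul_of_nonneg_right (hnorm y hyK) (norm_nonneg _)
    have h5 : ⟪y, π₁⟫_ℝ - ⟪y, π₂⟫_ℝ = ⟪y, π₁ - π₂⟫_ℝ := (inner_sub_right _ _ _).symm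
    rw [Real.coe_toNNReal _ hR0]
    linarith
  -- V is locally Lipschitz
  have hVeq : V = fun z => ⟪z, F z⟫_ℝ - m (F z) := funext hV
  have hinnerC : ContDiff ℝ 1 (fun z : EuclideanSpace ℝ (Fin n) => ⟪z, F z⟫_ℝ) :=
    contDiff_id.inner ℝ hF
  have hVL : LocallyLipschitz V := by
    rw [hVeq]
    exact hinnerC.locallyLipschitz.sub (hmLip.locallyLipschitz.comp hF.locallyLipschitz)
  have hHL : LocallyLipschitz (fun t => Real.exp t * V (x t)) := by
    have hmulC : ContDiff ℝ 1 (fun p : ℝ × ℝ => p.1 * p.2) := contDiff_fst.mul contDiff_snd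
    have hmul : LocallyLipschitz (fun p : ℝ × ℝ => p.1 * p.2) := hmulC.locallyLipschitz
    have hexp : LocallyLipschitz Real.exp := (Real.contDiff_exp.of_le le_top).locallyLipschitz
    exact hmul.comp (hexp.prodMk (hVL.comp hlip))
  obtain ⟨KH, hKH⟩ := hHL.exists_lipschitzOnWith_Icc (-1) (T + 1)
  obtain ⟨g, hglip, hgeq⟩ := hKH.extend_real
  have hdyn' := ae_imp_of_ae_restrict hdyn
  have hderiv_ae : ∀ᵐ t : ℝ, t ∈ Set.Ioc 0 T → deriv g t ≤ 0 := by
    filter_upwards [hdyn', hglip.ae_differentiableAt (μ := volume)] with t hdyn_t hdiff_t ht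
    obtain ⟨b, ⟨hbK, hbmin⟩, hx'⟩ := hdyn_t ht.1.le
    have hev : (fun s => Real.exp s * V (x s)) =ᶠ[nhds t] g :=
      Filter.eventually_of_mem (Ioo_mem_nhds (by linarith [ht.1] : (-1:ℝ) < t)
        (by linarith [ht.2] : t < T + 1))
        (fun s hs => hgeq ⟨hs.1.le, hs.2.le⟩)
    have hH : HasDerivAt (fun s => Real.exp s * V (x s)) (deriv g t) t :=
      hdiff_t.hasDerivAt.congr_of_eventuallyEq hev
    have hzK : x t ∈ K := hxK t ht.1.le
    have hFx : HasDerivAt (fun s => F (x s)) (fderiv ℝ F (x t) (b - x t)) t :=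
      ((hF.differentiable one_ne_zero) (x t)).hasFDerivAt.comp_hasDerivAt t hx'
    have hxb : HasDerivAt (fun s => x s - b) (b - x t) t := hx'.sub_const b
    have hψ : HasDerivAt (fun s => ⟪x s - b, F (x s)⟫_ℝ)
        (⟪x t - b, fderiv ℝ F (x t) (b - x t)⟫_ℝ + ⟪b - x t, F (x t)⟫_ℝ) t :=
      HasDerivAt.inner ℝ hxb hFx
    have hφ : HasDerivAt (fun s => Real.exp s * ⟪x s - b, F (x s)⟫_ℝ)
        (Real.exp t * ⟪x t - b, F (x t)⟫_ℝ +
          Real.exp t * (⟪x t - b, fderiv ℝ F (x t) (b - x t)⟫_ℝ + ⟪b - x t, F (x t)⟫_ℝ)) t :=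
      (Real.hasDerivAt_exp t).mul hψ
    have hmeq : m (F (x t)) = ⟪b, F (x t)⟫_ℝ := by
      refine le_antisymm (hmle _ b hbK) ?_
      obtain ⟨y, hyK, hyeq⟩ := (hm (F (x t))).1
      simp only at hyeq
      rw [← hyeq]
      exact hbmin y hyK
    have hvt : V (x t) = ⟪x t - b, F (x t)⟫_ℝ := by
      rw [hV (x t), hmeq, inner_sub_left]
    have hlocmin : IsLocalMin
        (fun s => Real.exp s * V (x s) - Real.exp s * ⟪x s - b, F (x s)⟫_ℝ) t := by
      have hevmin : ∀ᶠ s in nhds t,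
          Real.exp t * V (x t) - Real.exp t * ⟪x t - b, F (x t)⟫_ℝ ≤
          Real.exp s * V (x s) - Real.exp s * ⟪x s - b, F (x s)⟫_ℝ := by
        filter_upwards [Ioi_mem_nhds ht.1] with s hs
        have hxsK : x s ∈ K := hxK s (le_of_lt hs)
        have hms : m (F (x s)) ≤ ⟪b, F (x s)⟫_ℝ := hmle _ b hbK
        have hVs := hV (x s)
        have hinner : ⟪x s - b, F (x s)⟫_ℝ = ⟪x s, F (x s)⟫_ℝ - ⟪b, F (x s)⟫_ℝ :=
          inner_sub_left _ _ _
        have ht0 : Real.exp t * V (x t) - Real.exp t * ⟪x t - b, F (x t)⟫_ℝ = 0 := by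
          rw [hvt]; ring
        rw [ht0]
        nlinarith [Real.exp_pos s]
      exact hevmin
    have hderiv0 := hlocmin.hasDerivAt_eq_zero (hH.sub hφ)
    rw [sub_eq_zero] at hderiv0
    rw [hderiv0]
    have e1 : ⟪b - x t, F (x t)⟫_ℝ = -⟪x t - b, F (x t)⟫_ℝ := by
      rw [show b - x t = -(x t - b) from (neg_sub (x t) b).symm, inner_neg_left]
    have e2 : ⟪x t - b, fderiv ℝ F (x t) (b - x t)⟫_ℝ
        = -⟪b - x t, fderiv ℝ F (x t) (b - x t)⟫_ℝ := by
      rw [show x t - b = -(b - x t) from (neg_sub b (x t)).symm, inner_neg_left]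
    have hq : 0 ≤ ⟪b - x t, fderiv ℝ F (x t) (b - x t)⟫_ℝ :=
      quad_nonneg hKconv hF hmono hzK hbK
    rw [e1, e2]
    nlinarith [mul_nonneg (Real.exp_pos t).le hq]
  have hg0 : g T ≤ g 0 := gronwall_aux hglip hT hderiv_ae
  have h0m : (0:ℝ) ∈ Set.Icc (-1:ℝ) (T+1) := ⟨by linarith, by linarith⟩
  have hTm : T ∈ Set.Icc (-1:ℝ) (T+1) := ⟨by linarith, by linarith⟩
  rw [← hgeq hTm, ← hgeq h0m] at hg0
  simp only [Real.exp_zero, one_mul] at hg0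
  have hTpos := Real.exp_pos T
  rw [Real.exp_neg]
  calc V (x T) = (Real.exp T * V (x T)) * (Real.exp T)⁻¹ := by field_simp
    _ ≤ V (x 0) * (Real.exp T)⁻¹ :=
      mul_le_mul_of_nonneg_right hg0 (inv_nonneg.2 hTpos.le)
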